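/- Let n, m be natural numbers, p ∈ [0,1] with n·p ≤ 1, and let μ be a probability measure on a measurable space X that assigns mass μ({x_i}) = p to each of n distinct points x₁, …, x_n. Then the probability, under the m-fold product measure μ^{⊗m} on X^m, that every one of the n designated points appears among the m coordinates equals Σ_{i=0}^{n} (−1)^i · C(n, i) · (1 − i·p)^m, where C(n,i) is the binomial coefficient. -/

import Mathlib

open MeasureTheory

/-- **Inclusion–exclusion coverage formula.** If a probability measure `μ`
assigns mass `p` to each of `n` distinct points `x 0, …, x (n-1)` (with
`n·p ≤ 1`), then the probability under the `m`-fold product measure `μ^{⊗m}`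
that every one of the `n` designated points appears among the `m` coordinates
equals `∑_{i=0}^{n} (−1)^i C(n,i) (1 − i·p)^m`. -/
theorem coverage_inclusion_exclusion
    {X : Type*} [MeasurableSpace X] [MeasurableSingletonClass X]
    (n m : ℕ) (p : ℝ) (hp0 : 0 ≤ p) (hp1 : p ≤ 1) (hnp : (n : ℝ) * p ≤ 1)
    (μ : Measure X) [IsProbabilityMeasure μ]
    (x : Fin n → X) (hx : Function.Injective x)
    (hμ : ∀ i, μ {x i} = ENNReal.ofReal p) :
    (Measure.pi (fun _ : Fin m => μ)
        {f : Fin m → X | ∀ i : Fin n, ∃ j : Fin m, f j = x i}).toReal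
      = ∑ i ∈ Finset.range (n + 1),
          (-1 : ℝ) ^ i * (n.choose i) * (1 - (i : ℝ) * p) ^ m := by
  classical
  set ν : Measure (Fin m → X) := Measure.pi (fun _ : Fin m => μ) with hν
  haveI : IsProbabilityMeasure ν := by
    constructor
    rw [hν]
    simp [Measure.pi_univ]
  -- the events
  set E : Fin n → Set (Fin m → X) := fun i => {f | ∃ j, f j = x i} with hEdef
  have hE : ∀ i, MeasurableSet (E i) := by
    intro i
    have : E i = ⋃ j : Fin m, (fun f : Fin m → X => f j) ⁻¹' {x i} := by
      ext f; simp [hEdef, eq_comm]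
    rw [this]
    exact MeasurableSet.iUnion fun j =>
      (measurable_pi_apply j) (measurableSet_singleton (x i))
  -- the avoidance sets
  set A : Finset (Fin n) → Set (Fin m → X) :=
    fun S => Set.pi Set.univ (fun _ : Fin m => (x '' ↑S)ᶜ) with hAdef
  have hxS : ∀ S : Finset (Fin n), μ (x '' ↑S) = ENNReal.ofReal (S.card * p) := by
    intro S
    have himg : x '' ↑S = ⋃ i ∈ S, {x i} := by
      ext y; simp [Set.image, eq_comm]
    rw [himg, measure_biUnion_finset]
    · rw [Finset.sum_congr rfl (fun i _ => hμ i), Finset.sum_const, nsmul_eq_mul,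
        ← ENNReal.ofReal_natCast, ← ENNReal.ofReal_mul (by positivity)]
    · intro i _ j _ hij
      simp only [Set.disjoint_singleton]
      exact fun h => hij (hx h)
    · intro i _; exact measurableSet_singleton _
  have hcardp : ∀ S : Finset (Fin n), (S.card : ℝ) * p ≤ 1 := by
    intro S
    have hcn : S.card ≤ n := by simpa using S.card_le_univ
    calc (S.card : ℝ) * p ≤ (n : ℝ) * p :=
          mul_le_mul_of_nonneg_right (by exact_mod_cast hcn) hp0
      _ ≤ 1 := hnp
  have hAmeas : ∀ S, MeasurableSet (A S) := by
    intro S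
    apply MeasurableSet.univ_pi
    intro _
    exact ((Set.Finite.image x S.finite_toSet).measurableSet).compl
  have hAval : ∀ S : Finset (Fin n), (ν (A S)).toReal = (1 - (S.card : ℝ) * p) ^ m := by
    intro S
    have hcompl : μ ((x '' ↑S)ᶜ) = ENNReal.ofReal (1 - S.card * p) := by
      rw [measure_compl (Set.Finite.image x S.finite_toSet).measurableSet (measure_ne_top _ _),
        measure_univ, hxS S, ENNReal.ofReal_sub _ (by positivity), ENNReal.ofReal_one]
    rw [hν, hAdef]
    simp only [Measure.pi_pi, hcompl, Finset.prod_const, Finset.card_univ, Fintype.card_fin]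
    rw [← ENNReal.ofReal_pow (by linarith [hcardp S]), ENNReal.toReal_ofReal
      (pow_nonneg (by linarith [hcardp S]) m)]
  -- A S is the intersection of the complements of E i over i ∈ S
  have hAE : ∀ (S : Finset (Fin n)) (f : Fin m → X),
      f ∈ A S ↔ ∀ i ∈ S, f ∉ E i := by
    intro S f
    simp only [hAdef, Set.mem_pi, Set.mem_univ, forall_true_left, Set.mem_compl_iff,
      Set.mem_image, hEdef, Set.mem_setOf_eq]
    constructor
    · rintro h i hi ⟨j, hj⟩
      exact h j ⟨i, hi, hj.symm⟩
    · rintro h j ⟨i, hi, hij⟩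
      exact h i hi ⟨j, hij.symm⟩
  -- pointwise inclusion-exclusion identity for indicators
  have hIE : ∀ f : Fin m → X,
      Set.indicator (⋂ i, E i) (1 : (Fin m → X) → ℝ) f
        = ∑ S : Finset (Fin n),
            (-1 : ℝ) ^ S.card * Set.indicator (A S) (1 : (Fin m → X) → ℝ) f := by
    intro f
    have hprod : ∀ S : Finset (Fin n),
        (∏ i ∈ S, ((1 : ℝ) - Set.indicator (E i) (1 : (Fin m → X) → ℝ) f))
          = Set.indicator (A S) (1 : (Fin m → X) → ℝ) f := by
      intro S
      by_cases h : f ∈ A S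
      · rw [Set.indicator_of_mem h, Pi.one_apply]
        apply Finset.prod_eq_one
        intro i hi
        rw [Set.indicator_of_notMem ((hAE S f).1 h i hi), sub_zero]
      · rw [Set.indicator_of_notMem h]
        obtain ⟨i, hi, hfi⟩ := by
          simpa [hAE S f, not_forall] using h
        refine Finset.prod_eq_zero hi ?_
        rw [Set.indicator_of_mem hfi, Pi.one_apply, sub_self]
    have hleft : Set.indicator (⋂ i, E i) (1 : (Fin m → X) → ℝ) f
        = ∏ i : Fin n,
            ((1 : ℝ) - ((1 : ℝ) - Set.indicator (E i) (1 : (Fin m → X) → ℝ) f)) := by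
      by_cases h : f ∈ ⋂ i, E i
      · rw [Set.indicator_of_mem h, Pi.one_apply]
        symm
        apply Finset.prod_eq_one
        intro i _
        rw [Set.indicator_of_mem (Set.mem_iInter.1 h i), Pi.one_apply]
        ring
      · rw [Set.indicator_of_notMem h]
        obtain ⟨i, hfi⟩ := by simpa [Set.mem_iInter, not_forall] using h
        symm
        refine Finset.prod_eq_zero (Finset.mem_univ i) ?_
        rw [Set.indicator_of_notMem hfi]
        ring
    rw [hleft, Finset.prod_sub (fun _ => (1 : ℝ))
      (fun i => (1 : ℝ) - Set.indicator (E i) (1 : (Fin m → X) → ℝ) f) Finset.univ,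
      Finset.powerset_univ]
    apply Finset.sum_congr rfl
    intro S _
    rw [Finset.prod_const_one, mul_one, hprod S]
  -- the target set is the intersection of the events
  have hTset : {f : Fin m → X | ∀ i : Fin n, ∃ j : Fin m, f j = x i} = ⋂ i, E i := by
    ext f; simp [hEdef]
  have hTmeas : MeasurableSet (⋂ i, E i) := MeasurableSet.iInter fun i => hE i
  -- integrate the pointwise identity
  have hInt : ∀ S : Finset (Fin n),
      Integrable (fun f => Set.indicator (A S) (1 : (Fin m → X) → ℝ) f) ν :=
    fun S => (integrable_const (1 : ℝ)).indicator (hAmeas S)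
  have hmain : (ν (⋂ i, E i)).toReal
      = ∑ S : Finset (Fin n), (-1 : ℝ) ^ S.card * (ν (A S)).toReal := by
    rw [← Measure.real_def, ← integral_indicator_one hTmeas]
    calc ∫ f, Set.indicator (⋂ i, E i) (1 : (Fin m → X) → ℝ) f ∂ν
        = ∫ f, ∑ S : Finset (Fin n),
            (-1 : ℝ) ^ S.card * Set.indicator (A S) (1 : (Fin m → X) → ℝ) f ∂ν := by
          exact integral_congr_ae (Filter.Eventually.of_forall hIE)
      _ = ∑ S : Finset (Fin n), ∫ f,
            (-1 : ℝ) ^ S.card * Set.indicator (A S) (1 : (Fin m → X) → ℝ) f ∂ν := by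
          apply integral_finset_sum
          intro S _
          exact (hInt S).const_mul _
      _ = ∑ S : Finset (Fin n), (-1 : ℝ) ^ S.card * (ν (A S)).toReal := by
          apply Finset.sum_congr rfl
          intro S _
          rw [integral_const_mul, integral_indicator_one (hAmeas S), Measure.real_def]
  -- put it all together, grouping subsets by cardinality
  rw [hTset, hmain]
  set F : ℕ → ℝ := fun k => (-1 : ℝ) ^ k * (1 - (k : ℝ) * p) ^ m with hF
  have h1 : ∑ S : Finset (Fin n), (-1 : ℝ) ^ S.card * (ν (A S)).toReal
      = ∑ S ∈ (Finset.univ : Finset (Fin n)).powerset, F S.card := by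
    rw [Finset.powerset_univ]
    exact Finset.sum_congr rfl fun S _ => by rw [hAval S, hF]
  rw [h1, Finset.sum_powerset_apply_card F]
  simp only [Finset.card_univ, Fintype.card_fin, nsmul_eq_mul, hF]
  apply Finset.sum_congr rfl
  intro i _
  ring
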